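/- Let λ > 0 and z⁰ ∈ (0,∞)^d with T^{(λ)}(z⁰) = (v⁰, h⁰). Then for every z ∈ (0,∞)^d with T^{(λ)}(z) = (v, h), one has ∑_{i=1}^d z_i/z⁰_i ≤ d if and only if h ≤ h⁰ − G(v − v⁰). That is, T^{(λ)} maps the half-space H⁺(z⁰) = {z : ∑ z_i/z⁰_i ≤ d} (intersected with (0,∞)^d) onto the down cone-like grain Π^↓((v⁰,h⁰)) := {(v,h) ∈ V × ℝ : h ≤ h⁰ − G(v − v⁰)}. -/

import Mathlib

noncomputable section

/-- The hyperplane `V = {x ∈ ℝ^d : ∑ i, x i = 0}` as a submodule of Euclidean space. -/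
def Vsub (d : ℕ) : Submodule ℝ (EuclideanSpace ℝ (Fin d)) where
  carrier := {x | ∑ i, x i = 0}
  add_mem' := by
    intro a b ha hb
    simp only [Set.mem_setOf_eq] at ha hb ⊢
    simp [PiLp.add_apply, Finset.sum_add_distrib, ha, hb]
  zero_mem' := by
    simp only [Set.mem_setOf_eq]
    simp
  smul_mem' := by
    intro c x hx
    simp only [Set.mem_setOf_eq] at hx ⊢
    simp [PiLp.smul_apply, smul_eq_mul, ← Finset.mul_sum, hx]

/-- The function `G(v) = log((1/d) ∑ i, exp (v i))`. -/
def Gfun (d : ℕ) (v : EuclideanSpace ℝ (Fin d)) : ℝ :=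
  Real.log ((1 / (d : ℝ)) * ∑ i, Real.exp (v i))

/-- The scaling transform `T^{(λ)}(z) = (p_V (log z), (1/d)(log λ + ∑ i, log z i))`,
where `p_V` is the orthogonal projection onto the hyperplane `V`. -/
def Tmap (d : ℕ) (lam : ℝ) (z : EuclideanSpace ℝ (Fin d)) : Vsub d × ℝ :=
  ((Vsub d).orthogonalProjectionOnto (WithLp.toLp 2 (fun i => Real.log (z i)) : EuclideanSpace ℝ (Fin d)),
    (1 / (d : ℝ)) * (Real.log lam + ∑ i, Real.log (z i)))

/-- The inverse scaling transform `U^{(λ)}(v,h) = λ^{-1/d} e^h e^{l(v)}`. -/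
def Umap (d : ℕ) (lam : ℝ) (p : Vsub d × ℝ) : EuclideanSpace ℝ (Fin d) :=
  (WithLp.toLp 2 (fun i => lam ^ (-(1 : ℝ) / (d : ℝ)) * Real.exp p.2 *
    Real.exp ((p.1 : EuclideanSpace ℝ (Fin d)) i)) : EuclideanSpace ℝ (Fin d))

end

lemma proj_Vsub (d : ℕ) (hd : 0 < d) (x : EuclideanSpace ℝ (Fin d)) :
    ((Vsub d).orthogonalProjectionOnto x : EuclideanSpace ℝ (Fin d)) =
      (WithLp.toLp 2 (fun i => x i - (∑ j, x j) / d) : EuclideanSpace ℝ (Fin d)) := by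
  have hd' : (d : ℝ) ≠ 0 := Nat.cast_ne_zero.mpr hd.ne'
  rw [← Submodule.starProjection_apply]
  apply Submodule.eq_starProjection_of_mem_of_inner_eq_zero
  · show ∑ i, (x i - (∑ j, x j) / d) = 0
    rw [Finset.sum_sub_distrib, Finset.sum_const, Finset.card_univ, Fintype.card_fin, nsmul_eq_mul]
    field_simp
    ring
  · intro w hw
    have hw' : ∑ i, w i = 0 := hw
    rw [PiLp.inner_apply]
    simp only [RCLike.inner_apply, conj_trivial, PiLp.sub_apply, PiLp.toLp_apply]
    have : ∀ i, (x i - (x i - (∑ j, x j) / d)) * w i = ((∑ j, x j) / d) * w i := by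
      intro i; ring
    rw [Finset.sum_congr rfl fun i _ => (mul_comm _ _).trans (this i), ← Finset.mul_sum, hw', mul_zero]

/-- `T^{(λ)}` maps the half-space `H⁺(z⁰) = {z : ∑ i, z i / z⁰ i ≤ d}` (intersected
with the positive orthant) onto the down cone-like grain
`Π^↓(T^{(λ)}(z⁰)) = {(v,h) : h ≤ h⁰ − G(v − v⁰)}`: for `z, z⁰ ∈ (0,∞)^d` with
`T^{(λ)}(z) = (v,h)` and `T^{(λ)}(z⁰) = (v⁰,h⁰)`, one has
`∑ i, z i / z⁰ i ≤ d ↔ h ≤ h⁰ − G(v − v⁰)`. -/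
theorem statement10 (d : ℕ) (hd : 2 ≤ d) (lam : ℝ) (hlam : 0 < lam)
    (z0 : EuclideanSpace ℝ (Fin d)) (hz0 : ∀ i, 0 < z0 i)
    (z : EuclideanSpace ℝ (Fin d)) (hz : ∀ i, 0 < z i) :
    (∑ i, z i / z0 i ≤ (d : ℝ)) ↔
      (Tmap d lam z).2 ≤ (Tmap d lam z0).2 -
        Gfun d (((Tmap d lam z).1 : EuclideanSpace ℝ (Fin d)) -
          ((Tmap d lam z0).1 : EuclideanSpace ℝ (Fin d))) := by
  have hd0 : 0 < d := lt_of_lt_of_le two_pos hd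
  have hdR : (0:ℝ) < d := by exact_mod_cast hd0
  have hd' : (d : ℝ) ≠ 0 := hdR.ne'
  set m : ℝ := (∑ j, Real.log (z j)) / d with hm
  set m0 : ℝ := (∑ j, Real.log (z0 j)) / d with hm0
  have hv : (((Tmap d lam z).1 : EuclideanSpace ℝ (Fin d)) -
      ((Tmap d lam z0).1 : EuclideanSpace ℝ (Fin d))) =
      (WithLp.toLp 2 (fun i => Real.log (z i) - Real.log (z0 i) - (m - m0)) : EuclideanSpace ℝ (Fin d)) := by
    simp only [Tmap, proj_Vsub d hd0]
    ext i
    simp only [PiLp.sub_apply, PiLp.toLp_apply]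
    ring
  have hsum : ∑ i, Real.exp (Real.log (z i) - Real.log (z0 i) - (m - m0)) =
      Real.exp (m0 - m) * ∑ i, z i / z0 i := by
    rw [Finset.mul_sum]
    refine Finset.sum_congr rfl fun i _ => ?_
    rw [Real.exp_sub, Real.exp_sub, Real.exp_log (hz i), Real.exp_log (hz0 i),
      show Real.exp (m0 - m) = (Real.exp (m - m0))⁻¹ by rw [← Real.exp_neg, neg_sub]]
    ring
  have : Nonempty (Fin d) := ⟨⟨0, hd0⟩⟩
  have hpos : 0 < ∑ i, z i / z0 i :=
    Finset.sum_pos (fun i _ => div_pos (hz i) (hz0 i)) Finset.univ_nonempty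
  have hG : Gfun d (((Tmap d lam z).1 : EuclideanSpace ℝ (Fin d)) -
      ((Tmap d lam z0).1 : EuclideanSpace ℝ (Fin d))) =
      Real.log ((1 / (d:ℝ)) * ∑ i, z i / z0 i) + (m0 - m) := by
    rw [Gfun]
    simp only [hv, PiLp.toLp_apply]
    rw [hsum, show (1 / (d:ℝ)) * (Real.exp (m0 - m) * ∑ i, z i / z0 i) =
      ((1 / (d:ℝ)) * ∑ i, z i / z0 i) * Real.exp (m0 - m) by ring,
      Real.log_mul (by positivity) (Real.exp_ne_zero _), Real.log_exp]
  have hT : (Tmap d lam z).2 = (1/(d:ℝ)) * Real.log lam + m := by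
    simp [Tmap, hm]; ring
  have hT0 : (Tmap d lam z0).2 = (1/(d:ℝ)) * Real.log lam + m0 := by
    simp [Tmap, hm0]; ring
  rw [hT, hT0, hG]
  rw [show (1/(d:ℝ)) * Real.log lam + m0 - (Real.log ((1 / (d:ℝ)) * ∑ i, z i / z0 i) + (m0 - m))
    = (1/(d:ℝ)) * Real.log lam + m - Real.log ((1 / (d:ℝ)) * ∑ i, z i / z0 i) by ring]
  constructor
  · intro h
    have : (1 / (d:ℝ)) * ∑ i, z i / z0 i ≤ 1 := by
      rw [div_mul_eq_mul_div, one_mul, div_le_one hdR]; exact h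
    have hlog : Real.log ((1 / (d:ℝ)) * ∑ i, z i / z0 i) ≤ 0 :=
      Real.log_nonpos (by positivity) this
    linarith
  · intro h
    have hlog : Real.log ((1 / (d:ℝ)) * ∑ i, z i / z0 i) ≤ 0 := by linarith
    have := (Real.log_nonpos_iff (by positivity)).mp hlog
    rw [div_mul_eq_mul_div, one_mul, div_le_one hdR] at this
    exact this
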